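/- Let K > 0 and let S : ℝ → ℝ be differentiable such that S(t)·S′(t) ≤ −K·|S(t)| for all t ≥ 0. Then S(t) = 0 for every t ≥ |S(0)| / K. (The sliding variable converges to zero in finite time bounded by T* = |S(0)|/K and remains zero thereafter.) -/

import Mathlib

/-- If the sliding variable is zero at some nonnegative time, it stays zero. -/
lemma slide_zero_persist (K : ℝ) (hK : 0 < K) (S : ℝ → ℝ) (hS : Differentiable ℝ S)
    (h : ∀ t : ℝ, 0 ≤ t → S t * deriv S t ≤ -K * |S t|)
    {t₀ t : ℝ} (ht₀ : 0 ≤ t₀) (htt : t₀ ≤ t) (hz : S t₀ = 0) : S t = 0 := by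
  set g : ℝ → ℝ := fun s => S s * S s with hg
  have hanti : AntitoneOn g (Set.Ici 0) := by
    apply antitoneOn_of_deriv_nonpos (convex_Ici 0)
    · exact (hS.continuous.mul hS.continuous).continuousOn
    · intro x _
      exact ((hS x).mul (hS x)).differentiableWithinAt
    · intro x hx
      rw [interior_Ici] at hx
      have hd : deriv g x = deriv S x * S x + S x * deriv S x :=
        deriv_mul (hS x) (hS x)
      have h1 := h x (le_of_lt hx)
      have h2 : -K * |S x| ≤ 0 := by
        have := abs_nonneg (S x); nlinarith
      rw [hd]; nlinarith
  have hle : g t ≤ g t₀ := hanti (Set.mem_Ici.2 ht₀) (Set.mem_Ici.2 (ht₀.trans htt)) htt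
  rw [hg] at hle
  simp only [hz] at hle
  nlinarith [sq_nonneg (S t)]

/-- In the positive case, the sliding variable hits zero by time S 0 / K. -/
lemma slide_hits_zero_pos (K : ℝ) (hK : 0 < K) (S : ℝ → ℝ) (hS : Differentiable ℝ S)
    (h : ∀ t : ℝ, 0 ≤ t → S t * deriv S t ≤ -K * |S t|)
    (hpos : 0 < S 0) : ∃ t₀ ∈ Set.Icc 0 (S 0 / K), S t₀ = 0 := by
  by_contra hcon
  push_neg at hcon
  set T : ℝ := S 0 / K with hT
  have hT0 : 0 < T := div_pos hpos hK
  have hSpos : ∀ t ∈ Set.Icc (0:ℝ) T, 0 < S t := by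
    intro t ht
    by_contra hle
    push_neg at hle
    have hne : S t ≠ 0 := hcon t ht
    have hlt : S t < 0 := lt_of_le_of_ne hle hne
    have hiv := intermediate_value_Icc' ht.1 hS.continuous.continuousOn
    have h0 : (0:ℝ) ∈ Set.Icc (S t) (S 0) := ⟨hlt.le, hpos.le⟩
    obtain ⟨x, hx, hx0⟩ := hiv h0
    exact hcon x ⟨hx.1, hx.2.trans ht.2⟩ hx0
  set f : ℝ → ℝ := fun s => S s + K * s with hf
  have hanti : AntitoneOn f (Set.Icc 0 T) := by
    apply antitoneOn_of_deriv_nonpos (convex_Icc 0 T)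
    · exact (hS.continuous.add (continuous_const.mul continuous_id)).continuousOn
    · intro x _
      exact ((hS x).add ((differentiable_const K).mul differentiable_id x)).differentiableWithinAt
    · intro x hx
      rw [interior_Icc] at hx
      have hd : deriv f x = deriv S x + K := by
        rw [hf]
        have : deriv (fun s : ℝ => S s + K * s) x
            = deriv S x + deriv (fun s : ℝ => K * s) x :=
          deriv_add (hS x) (((differentiable_const K).mul differentiable_id) x)
        rw [this, deriv_const_mul_field]
        simp
      have hx' : x ∈ Set.Icc (0:ℝ) T := ⟨hx.1.le, hx.2.le⟩
      have hSx : 0 < S x := hSpos x hx'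
      have h1 := h x hx.1.le
      rw [abs_of_pos hSx] at h1
      rw [hd]
      nlinarith
  have hle : f T ≤ f 0 := hanti ⟨le_refl 0, hT0.le⟩ ⟨hT0.le, le_refl T⟩ hT0.le
  have hST : 0 < S T := hSpos T ⟨hT0.le, le_refl T⟩
  rw [hf] at hle
  simp only at hle
  have : K * T = S 0 := by rw [hT]; field_simp [hK.ne']
  nlinarith

/-- The sliding variable hits zero by time |S 0| / K. -/
lemma slide_hits_zero (K : ℝ) (hK : 0 < K) (S : ℝ → ℝ) (hS : Differentiable ℝ S)
    (h : ∀ t : ℝ, 0 ≤ t → S t * deriv S t ≤ -K * |S t|) :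
    ∃ t₀ ∈ Set.Icc 0 (|S 0| / K), S t₀ = 0 := by
  rcases lt_trichotomy (S 0) 0 with hneg | hz | hpos
  · have h' : ∀ t : ℝ, 0 ≤ t → (-S) t * deriv (-S) t ≤ -K * |(-S) t| := by
      intro t ht
      have : deriv (-S) t = -deriv S t := deriv.neg
      simp only [Pi.neg_apply, this, abs_neg]
      nlinarith [h t ht]
    obtain ⟨t₀, ht₀, hz⟩ := slide_hits_zero_pos K hK (-S) hS.neg h'
      (by simpa using hneg)
    refine ⟨t₀, ?_, ?_⟩
    · have : |S 0| = -S 0 := abs_of_neg hneg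
      simpa [this] using ht₀
    · simpa using hz
  · exact ⟨0, ⟨le_refl 0, by positivity⟩, hz⟩
  · obtain ⟨t₀, ht₀, hz⟩ := slide_hits_zero_pos K hK S hS h hpos
    exact ⟨t₀, by rwa [abs_of_pos hpos], hz⟩

/-- Finite-time convergence of the sliding variable: if S·S′ ≤ −K·|S| for all t ≥ 0,
then S vanishes for every t ≥ |S(0)|/K and stays zero thereafter. -/
theorem stmt_8 (K : ℝ) (hK : 0 < K) (S : ℝ → ℝ) (hS : Differentiable ℝ S)
    (h : ∀ t : ℝ, 0 ≤ t → S t * deriv S t ≤ -K * |S t|) :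
    ∀ t : ℝ, |S 0| / K ≤ t → S t = 0 := by
  intro t ht
  obtain ⟨t₀, ht₀, hz⟩ := slide_hits_zero K hK S hS h
  exact slide_zero_persist K hK S hS h ht₀.1 (ht₀.2.trans ht) hz
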